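/- arXiv:2509.16672 — 2 statements merged into one kernel-verified Lean document; each statement's English description precedes it below -/
import Mathlib

section
/- Let s, t ∈ ℂ with |s|² > |t|² + 1. Then ∫_ℂ ∫_ℂ |K^{(s,t)}(z,w)|² · dλ(w) · dλ(z) = |s| / (|s|²−|t|²−1). (This is the square of the Hilbert–Schmidt norm of the canonical integral operator T^{(s,t)} on the Fock space F².) -/
set_option maxHeartbeats 2000000


open MeasureTheory Real Filter

/-- Principal branch of the complex square root. -/
noncomputable def csqrt (z : ℂ) : ℂ := z ^ ((1 : ℂ) / 2)

/-- The canonical integral kernel `K^{(s,t)}(z,w)`. -/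
noncomputable def Kst (s t z w : ℂ) : ℂ :=
  (csqrt s)⁻¹ *
    Complex.exp ((t * z ^ 2 - (starRingEnd ℂ) t * ((starRingEnd ℂ) w) ^ 2
      + 2 * z * (starRingEnd ℂ) w) / (2 * s))

/-- Density of the Gaussian measure `dλ(z) = π⁻¹ e^{-|z|²} dA(z)` with respect to
Lebesgue area measure on `ℂ`. -/
noncomputable def gw (z : ℂ) : ℝ := Real.exp (-‖z‖ ^ 2) / Real.pi


lemma gauss1_integrable (a b : ℝ) (ha : 0 < a) :
    Integrable (fun x : ℝ => Real.exp (-a*x^2 + b*x)) := by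
  have h : ∀ x : ℝ, Real.exp (-a*x^2 + b*x)
      = Real.exp (-a * (x - b/(2*a))^2) * Real.exp (b^2/(4*a)) := by
    intro x; rw [← Real.exp_add]; congr 1; field_simp; ring
  simp only [h]
  exact ((integrable_exp_neg_mul_sq ha).comp_sub_right (b/(2*a))).mul_const _

lemma gauss1 (a b : ℝ) (ha : 0 < a) :
    ∫ x : ℝ, Real.exp (-a*x^2 + b*x) = Real.sqrt (π/a) * Real.exp (b^2/(4*a)) := by
  have h : ∀ x : ℝ, Real.exp (-a*x^2 + b*x)
      = Real.exp (-a * (x - b/(2*a))^2) * Real.exp (b^2/(4*a)) := by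
    intro x; rw [← Real.exp_add]; congr 1; field_simp; ring
  simp only [h]
  rw [integral_mul_const,
    integral_sub_right_eq_self (fun x : ℝ => Real.exp (-a*x^2)) (b/(2*a)),
    integral_gaussian]

lemma gauss2 (A B C p q : ℝ) (hA : 0 < A) (hD : 0 < A*C - B^2) :
    ∫ w : ℂ, Real.exp (-(A*w.re^2 + 2*B*w.re*w.im + C*w.im^2) + p*w.re + q*w.im)
      = π / Real.sqrt (A*C-B^2)
        * Real.exp ((C*p^2 - 2*B*p*q + A*q^2)/(4*(A*C-B^2))) := by
  have hC : 0 < C := by nlinarith [sq_nonneg B]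
  set α : ℝ := (A*C-B^2)/(2*C) with hα_def
  set β : ℝ := C*(A*C-B^2)/(A*C+B^2) with hβ_def
  have hACB : 0 < A*C + B^2 := by nlinarith [sq_nonneg B]
  have hα : 0 < α := by positivity
  have hβ : 0 < β := by positivity
  have hAα : 0 < A - α := by
    rw [hα_def]; rw [sub_pos, div_lt_iff₀ (by linarith)]; nlinarith [sq_nonneg B]
  have key : ∀ x y : ℝ, α*x^2 + β*y^2 ≤ A*x^2 + 2*B*x*y + C*y^2 := by
    intro x y
    have expand : A*x^2 + 2*B*x*y + C*y^2 - (α*x^2 + β*y^2)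
        = ((A-α)*x + B*y)^2/(A-α) := by
      rw [eq_div_iff hAα.ne', hα_def, hβ_def]
      field_simp
      ring
    nlinarith [div_nonneg (sq_nonneg ((A-α)*x + B*y)) hAα.le, expand]
  have step1 : (∫ w : ℂ, Real.exp (-(A*w.re^2 + 2*B*w.re*w.im + C*w.im^2) + p*w.re + q*w.im))
      = ∫ v : ℝ × ℝ, Real.exp (-(A*v.1^2 + 2*B*v.1*v.2 + C*v.2^2) + p*v.1 + q*v.2) := by
    rw [← (Complex.volume_preserving_equiv_real_prod.symm).integral_comp
      Complex.measurableEquivRealProd.symm.measurableEmbedding]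
    rfl
  rw [step1]
  have hint : Integrable
      (fun v : ℝ × ℝ => Real.exp (-(A*v.1^2 + 2*B*v.1*v.2 + C*v.2^2) + p*v.1 + q*v.2))
      (volume : Measure (ℝ × ℝ)) := by
    rw [MeasureTheory.Measure.volume_eq_prod]
    refine Integrable.mono' ((gauss1_integrable α p hα).mul_prod (gauss1_integrable β q hβ))
      (Continuous.aestronglyMeasurable (by continuity)) ?_
    filter_upwards with v
    rw [Real.norm_eq_abs, Real.abs_exp, ← Real.exp_add]
    exact Real.exp_le_exp.mpr (by nlinarith [key v.1 v.2])
  rw [MeasureTheory.Measure.volume_eq_prod, integral_prod _ (by rwa [← MeasureTheory.Measure.volume_eq_prod])]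
  have hsplit : ∀ x y : ℝ, Real.exp (-(A*x^2 + 2*B*x*y + C*y^2) + p*x + q*y)
      = Real.exp (-C*y^2 + (q - 2*B*x)*y) * Real.exp (-A*x^2 + p*x) := by
    intro x y; rw [← Real.exp_add]; congr 1; ring
  simp only [hsplit]
  have hy : ∀ x : ℝ, (∫ y : ℝ, Real.exp (-C*y^2 + (q - 2*B*x)*y) * Real.exp (-A*x^2 + p*x))
      = Real.sqrt (π/C) * Real.exp ((q - 2*B*x)^2/(4*C)) * Real.exp (-A*x^2 + p*x) := by
    intro x; rw [integral_mul_const, gauss1 C (q - 2*B*x) hC]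
  simp only [hy]
  have hx : ∀ x : ℝ, Real.sqrt (π/C) * Real.exp ((q - 2*B*x)^2/(4*C)) * Real.exp (-A*x^2 + p*x)
      = Real.sqrt (π/C) * Real.exp (q^2/(4*C))
        * Real.exp (-((A*C-B^2)/C)*x^2 + (p - B*q/C)*x) := by
    intro x
    rw [mul_assoc, ← Real.exp_add]
    conv_rhs => rw [mul_assoc, ← Real.exp_add]
    congr 1
    field_simp
    ring
  simp only [hx]
  rw [integral_const_mul, gauss1 _ _ (by positivity)]
  rw [show (π/((A*C-B^2)/C)) = π*C/(A*C-B^2) by field_simp]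
  rw [mul_assoc, ← mul_assoc (Real.exp (q^2/(4*C))), mul_comm (Real.exp (q^2/(4*C))),
    mul_assoc, ← Real.exp_add, ← mul_assoc, ← Real.sqrt_mul (by positivity)]
  rw [show π/C*(π*C/(A*C-B^2)) = π^2/(A*C-B^2) by field_simp]
  rw [Real.sqrt_div (sq_nonneg π), Real.sqrt_sq Real.pi_nonneg]
  congr 1
  congr 1
  have hD' : C*A-B^2 ≠ 0 := by nlinarith
  field_simp
  ring

theorem aux1 (a b NN MM : ℝ) (h : NN ≠ 0) (hu : a^2 + b^2 = MM*NN) :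
    (1+a/NN)*(1-a/NN) - (-(b/NN))^2 = (NN-MM)/NN := by
  calc (1+a/NN)*(1-a/NN) - (-(b/NN))^2 = 1 - (a^2+b^2)/NN^2 := by ring
    _ = 1 - (MM*NN)/NN^2 := by rw [hu]
    _ = (NN-MM)/NN := by field_simp

theorem aux2 (a b NN MM : ℝ) (hN : NN ≠ 0) (hNM : NN - MM ≠ 0) (hu : a^2 + b^2 = MM*NN) :
    ((NN-MM-1)/(NN-MM)*(1-a/NN)) * ((NN-MM-1)/(NN-MM)*(1+a/NN))
      - ((NN-MM-1)/(NN-MM)*(b/NN))^2 = (NN-MM-1)^2/((NN-MM)*NN) := by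
  calc ((NN-MM-1)/(NN-MM)*(1-a/NN)) * ((NN-MM-1)/(NN-MM)*(1+a/NN))
        - ((NN-MM-1)/(NN-MM)*(b/NN))^2
      = ((NN-MM-1)/(NN-MM))^2 * ((1+a/NN)*(1-a/NN) - (-(b/NN))^2) := by ring
    _ = ((NN-MM-1)/(NN-MM))^2 * ((NN-MM)/NN) := by rw [aux1 a b NN MM hN hu]
    _ = (NN-MM-1)^2/((NN-MM)*NN) := by field_simp


theorem stmt6 (s t : ℂ) (hst : ‖s‖ ^ 2 > ‖t‖ ^ 2 + 1) :
    (∫ z : ℂ, (∫ w : ℂ, ‖Kst s t z w‖ ^ 2 * gw w) * gw z)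
      = ‖s‖ / (‖s‖ ^ 2 - ‖t‖ ^ 2 - 1) := by
  set N := Complex.normSq s with hN_def
  set M := Complex.normSq t with hM_def
  have hNM : M + 1 < N := by
    rw [Complex.sq_norm, Complex.sq_norm, ← hN_def, ← hM_def] at hst; exact hst
  have hM0 : 0 ≤ M := Complex.normSq_nonneg t
  have hN0 : 0 < N := by linarith
  have hs0 : s ≠ 0 := by
    intro h; rw [hN_def, h, Complex.normSq_zero] at hN0; exact lt_irrefl 0 hN0
  have hNM0 : 0 < N - M := by linarith
  have hc0 : 0 < N - M - 1 := by linarith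
  have hNsum : s.re * s.re + s.im * s.im = N := by rw [hN_def, Complex.normSq_apply]
  have hNne : s.re^2 + s.im^2 ≠ 0 := by
    intro h; rw [pow_two, pow_two, hNsum] at h; exact hN0.ne' h
  have hNMne : N - M ≠ 0 := hNM0.ne'
  -- facts about t*s
  have hu : (t*s).re^2 + (t*s).im^2 = M*N := by
    rw [hM_def, hN_def, ← Complex.normSq_mul, Complex.normSq_apply]; ring
  have hresq : (t*s).re^2 < N^2 := by nlinarith [sq_nonneg (t*s).im]
  have hre1 : (t*s).re < N := by nlinarith
  have hre2 : -N < (t*s).re := by nlinarith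
  -- facts about t * conj s
  have hu' : (t*(starRingEnd ℂ) s).re^2 + (t*(starRingEnd ℂ) s).im^2 = M*N := by
    rw [hM_def, hN_def, ← Complex.normSq_conj s, ← Complex.normSq_mul, Complex.normSq_apply]
    ring
  have hresq' : (t*(starRingEnd ℂ) s).re^2 < N^2 := by
    nlinarith [sq_nonneg (t*(starRingEnd ℂ) s).im]
  have hre1' : (t*(starRingEnd ℂ) s).re < N := by nlinarith
  have hre2' : -N < (t*(starRingEnd ℂ) s).re := by nlinarith
  -- |Kst|^2
  have habsK : ∀ z w : ℂ, (‖Kst s t z w‖)^2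
      = Real.exp (((t*z^2 - (starRingEnd ℂ) t*((starRingEnd ℂ) w)^2
          + 2*z*(starRingEnd ℂ) w)/s).re) / Real.sqrt N := by
    intro z w
    rw [Kst]
    rw [norm_mul, norm_inv, Complex.norm_exp, mul_pow, inv_pow]
    rw [csqrt, show ((1:ℂ)/2) = (((1/2 : ℝ)) : ℂ) by norm_num, Complex.norm_cpow_real]
    rw [← Real.rpow_natCast (‖s‖ ^ ((1:ℝ)/2)) 2,
      ← Real.rpow_mul (norm_nonneg s)]
    norm_num
    have h2 : Real.exp (((t*z^2 - (starRingEnd ℂ) t*((starRingEnd ℂ) w)^2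
        + 2*z*(starRingEnd ℂ) w)/(2*s)).re) ^ 2
        = Real.exp (((t*z^2 - (starRingEnd ℂ) t*((starRingEnd ℂ) w)^2
            + 2*z*(starRingEnd ℂ) w)/s).re) := by
      rw [pow_two, ← Real.exp_add, ← Complex.add_re]
      congr 2
      field_simp
      ring
    rw [h2, Complex.norm_def, ← hN_def, inv_mul_eq_div]
  -- inner integral
  have inner : ∀ z : ℂ, (∫ w : ℂ, ‖Kst s t z w‖^2 * gw w)
      = (Real.sqrt (N-M))⁻¹
        * Real.exp ((t*z^2/s).re + ((z.re^2+z.im^2) - (t*z^2/s).re)/(N-M)) := by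
    intro z
    have hA : 0 < 1 + (t*s).re/N := by
      rw [show (1:ℝ) + (t*s).re/N = (N + (t*s).re)/N by field_simp]
      have : 0 < N + (t*s).re := by linarith
      positivity
    have hDeq : (1+(t*s).re/N)*(1-(t*s).re/N) - (-((t*s).im/N))^2 = (N-M)/N :=
      aux1 (t*s).re (t*s).im N M hN0.ne' hu
    have hpt : ∀ w : ℂ, ‖Kst s t z w‖^2 * gw w
        = Real.exp ((t*z^2/s).re) / (Real.sqrt N * π)
          * Real.exp (-( (1+(t*s).re/N)*w.re^2 + 2*(-((t*s).im/N))*w.re*w.im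
              + (1-(t*s).re/N)*w.im^2)
            + (2*((starRingEnd ℂ) z*s).re/N)*w.re
            + (-2*((starRingEnd ℂ) z*s).im/N)*w.im) := by
      intro w
      rw [habsK z w, gw]
      rw [div_mul_div_comm, ← Real.exp_add, div_mul_eq_mul_div, ← Real.exp_add]
      congr 2
      rw [hN_def]
      have h1 : s.re*s.re + s.im*s.im ≠ 0 := by
        intro h; apply hNne; rw [pow_two, pow_two]; linarith
      simp only [Complex.sq_norm]
      simp only [Complex.div_re, Complex.mul_re, Complex.mul_im, Complex.sub_re,
        Complex.sub_im, Complex.add_re, Complex.add_im, Complex.conj_re, Complex.conj_im,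
        Complex.normSq_apply, pow_two, Complex.re_ofNat, Complex.im_ofNat]
      field_simp
      ring
    have hE : ((1-(t*s).re/N)*(2*((starRingEnd ℂ) z*s).re/N)^2
        - 2*(-((t*s).im/N))*(2*((starRingEnd ℂ) z*s).re/N)*(-2*((starRingEnd ℂ) z*s).im/N)
        + (1+(t*s).re/N)*(-2*((starRingEnd ℂ) z*s).im/N)^2) / (4*((N-M)/N))
        = ((z.re^2 + z.im^2) - (t*z^2/s).re)/(N-M) := by
      rw [hN_def, hM_def]
      have h1 : s.re*s.re + s.im*s.im ≠ 0 := by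
        intro h; apply hNne; rw [pow_two, pow_two]; linarith
      have h2 : s.re*s.re + s.im*s.im - (t.re*t.re + t.im*t.im) ≠ 0 := by
        intro h; apply hNMne
        rw [hN_def, hM_def, Complex.normSq_apply, Complex.normSq_apply]; linarith
      simp only [Complex.div_re, Complex.mul_re, Complex.mul_im, Complex.sub_re,
        Complex.sub_im, Complex.add_re, Complex.add_im, Complex.conj_re, Complex.conj_im,
        Complex.normSq_apply, pow_two, Complex.re_ofNat, Complex.im_ofNat]
      field_simp
      ring
    simp only [hpt]
    rw [integral_const_mul, gauss2 _ _ _ _ _ hA (by rw [hDeq]; positivity)]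
    rw [hDeq, hE]
    rw [Real.sqrt_div hNM0.le N, Real.exp_add]
    have hsN : (0:ℝ) < Real.sqrt N := Real.sqrt_pos.mpr hN0
    have hsNM : (0:ℝ) < Real.sqrt (N-M) := Real.sqrt_pos.mpr hNM0
    field_simp
  simp only [inner]
  -- outer integral
  have hA2 : 0 < (N-M-1)/(N-M) * (1-(t*(starRingEnd ℂ) s).re/N) := by
    apply mul_pos (by positivity)
    rw [show (1:ℝ) - (t*(starRingEnd ℂ) s).re/N = (N - (t*(starRingEnd ℂ) s).re)/N by
      field_simp]
    have : 0 < N - (t*(starRingEnd ℂ) s).re := by linarith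
    positivity
  have hD2eq : ((N-M-1)/(N-M) * (1-(t*(starRingEnd ℂ) s).re/N))
        * ((N-M-1)/(N-M) * (1+(t*(starRingEnd ℂ) s).re/N))
      - ((N-M-1)/(N-M) * ((t*(starRingEnd ℂ) s).im/N))^2
      = (N-M-1)^2/((N-M)*N) :=
    aux2 (t*(starRingEnd ℂ) s).re (t*(starRingEnd ℂ) s).im N M hN0.ne' hNMne hu'
  have hpt2 : ∀ z : ℂ, (Real.sqrt (N-M))⁻¹
        * Real.exp ((t*z^2/s).re + ((z.re^2+z.im^2) - (t*z^2/s).re)/(N-M)) * gw z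
      = ((Real.sqrt (N-M))⁻¹ * π⁻¹)
        * Real.exp (-( ((N-M-1)/(N-M) * (1-(t*(starRingEnd ℂ) s).re/N))*z.re^2
            + 2*((N-M-1)/(N-M) * ((t*(starRingEnd ℂ) s).im/N))*z.re*z.im
            + ((N-M-1)/(N-M) * (1+(t*(starRingEnd ℂ) s).re/N))*z.im^2)
          + 0*z.re + 0*z.im) := by
    intro z
    have hexp : (t*z^2/s).re + ((z.re^2+z.im^2) - (t*z^2/s).re)/(N-M) + -(‖z‖^2)
        = -( ((N-M-1)/(N-M) * (1-(t*(starRingEnd ℂ) s).re/N))*z.re^2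
            + 2*((N-M-1)/(N-M) * ((t*(starRingEnd ℂ) s).im/N))*z.re*z.im
            + ((N-M-1)/(N-M) * (1+(t*(starRingEnd ℂ) s).re/N))*z.im^2)
          + 0*z.re + 0*z.im := by
      rw [hN_def, hM_def]
      have h1 : s.re*s.re + s.im*s.im ≠ 0 := by
        intro h; apply hNne; rw [pow_two, pow_two]; linarith
      have h2 : s.re*s.re + s.im*s.im - (t.re*t.re + t.im*t.im) ≠ 0 := by
        intro h; apply hNMne
        rw [hN_def, hM_def, Complex.normSq_apply, Complex.normSq_apply]; linarith
      have h3 : s.re^2 + s.im^2 - (t.re^2 + t.im^2) ≠ 0 := by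
        intro h; apply h2; linear_combination h
      simp only [Complex.sq_norm]
      simp only [Complex.div_re, Complex.mul_re, Complex.mul_im, Complex.sub_re,
        Complex.sub_im, Complex.add_re, Complex.add_im, Complex.conj_re, Complex.conj_im,
        Complex.normSq_apply, pow_two, Complex.re_ofNat, Complex.im_ofNat]
      field_simp
      ring
    calc (Real.sqrt (N-M))⁻¹
          * Real.exp ((t*z^2/s).re + ((z.re^2+z.im^2) - (t*z^2/s).re)/(N-M)) * gw z
        = ((Real.sqrt (N-M))⁻¹ * π⁻¹)
          * (Real.exp ((t*z^2/s).re + ((z.re^2+z.im^2) - (t*z^2/s).re)/(N-M))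
             * Real.exp (-‖z‖^2)) := by
          rw [gw]; ring
      _ = ((Real.sqrt (N-M))⁻¹ * π⁻¹)
          * Real.exp ((t*z^2/s).re + ((z.re^2+z.im^2) - (t*z^2/s).re)/(N-M)
              + -‖z‖^2) := by rw [← Real.exp_add]
      _ = _ := by rw [hexp]
  simp only [hpt2]
  rw [integral_const_mul, gauss2 _ _ _ _ _ hA2 (by rw [hD2eq]; positivity)]
  rw [hD2eq]
  rw [Complex.sq_norm, Complex.sq_norm, Complex.norm_def, ← hN_def, ← hM_def]
  rw [Real.sqrt_div (sq_nonneg (N-M-1)) ((N-M)*N), Real.sqrt_sq hc0.le,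
    Real.sqrt_mul hNM0.le N]
  have hsN : (0:ℝ) < Real.sqrt N := Real.sqrt_pos.mpr hN0
  have hsNM : (0:ℝ) < Real.sqrt (N-M) := Real.sqrt_pos.mpr hNM0
  have hsq : Real.sqrt N * Real.sqrt N = N := Real.mul_self_sqrt hN0.le
  rw [show ((((N-M-1)/(N-M) * (1+(t*(starRingEnd ℂ) s).re/N))*0^2
      - 2*((N-M-1)/(N-M) * ((t*(starRingEnd ℂ) s).im/N))*0*0
      + ((N-M-1)/(N-M) * (1-(t*(starRingEnd ℂ) s).re/N))*0^2)
      / (4*((N-M-1)^2/((N-M)*N)))) = 0 by norm_num, Real.exp_zero, mul_one]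
  field_simp
end

section
/- Let s, t ∈ ℂ with |s|² ≥ |t|² + 1. Then for every w ∈ ℂ: ∫_ℂ |K^{(s,t)}(z,w)|·e^{−(|z|²+|w|²)/2}·dA(z) ≤ (2π·√|s|/√(|s|²−|t|²)) · exp( −(|s|²−|t|²−1)·|w|²/(2|s|·(|s|+|t|)) ). In particular, sup_{w∈ℂ} ∫_ℂ |K^{(s,t)}(z,w)|·e^{−(|z|²+|w|²)/2}·dA(z) < ∞, and if |s|² > |t|² + 1 then ∫_ℂ |K^{(s,t)}(z,w)|·e^{−(|z|²+|w|²)/2}·dA(z) → 0 as |w| → ∞. -/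
open MeasureTheory Real Filter
open scoped ENNReal

section aux

lemma integrable_gauss1d {a : ℝ} (ha : 0 < a) (c : ℝ) :
    Integrable (fun x : ℝ => Real.exp (-a * x ^ 2 + c * x)) := by
  have key : ∀ x : ℝ, -a * x ^ 2 + c * x = -a * (x - c / (2 * a)) ^ 2 + c ^ 2 / (4 * a) := by
    intro x; field_simp; ring
  have : (fun x : ℝ => Real.exp (-a * x ^ 2 + c * x))
      = fun x => Real.exp (-a * (x - c / (2 * a)) ^ 2) * Real.exp (c ^ 2 / (4 * a)) := by
    funext x; rw [← Real.exp_add, key]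
  rw [this]
  exact ((integrable_exp_neg_mul_sq ha).comp_sub_right (c / (2 * a))).mul_const _

lemma gauss1d {a : ℝ} (ha : 0 < a) (c : ℝ) :
    ∫ x : ℝ, Real.exp (-a * x ^ 2 + c * x)
      = Real.sqrt (π / a) * Real.exp (c ^ 2 / (4 * a)) := by
  have key : ∀ x : ℝ, -a * x ^ 2 + c * x = -a * (x - c / (2 * a)) ^ 2 + c ^ 2 / (4 * a) := by
    intro x; field_simp; ring
  calc ∫ x : ℝ, Real.exp (-a * x ^ 2 + c * x)
      = ∫ x : ℝ, Real.exp (-a * (x - c / (2 * a)) ^ 2) * Real.exp (c ^ 2 / (4 * a)) := by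
        congr 1; funext x; rw [← Real.exp_add, key]
    _ = (∫ x : ℝ, Real.exp (-a * (x - c / (2 * a)) ^ 2)) * Real.exp (c ^ 2 / (4 * a)) :=
        integral_mul_const _ _
    _ = _ := by
        rw [integral_sub_right_eq_self (fun x => Real.exp (-a * x ^ 2)) (c / (2 * a)),
          integral_gaussian]

lemma gauss2d_pointwise (a : ℝ) (B : ℂ) (z : ℂ) :
    a * (z ^ 2).re + (B * z).re - ‖z‖ ^ 2 / 2
      = (-(1 / 2 - a) * z.re ^ 2 + B.re * z.re) + (-(1 / 2 + a) * z.im ^ 2 + (-B.im) * z.im) := by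
  rw [Complex.sq_norm]
  simp [pow_two, Complex.mul_re, Complex.normSq_apply]
  ring

lemma gauss2d_integrable {a : ℝ} (h1 : a < 1 / 2) (h2 : -(1 / 2 : ℝ) < a) (B : ℂ) :
    Integrable (fun z : ℂ =>
      Real.exp (a * (z ^ 2).re + (B * z).re - ‖z‖ ^ 2 / 2)) := by
  have hx : (0 : ℝ) < 1 / 2 - a := by linarith
  have hy : (0 : ℝ) < 1 / 2 + a := by linarith
  have h := (integrable_gauss1d hx B.re).mul_prod (integrable_gauss1d hy (-B.im))
  have hmp := Complex.volume_preserving_equiv_real_prod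
  have : (fun z : ℂ => Real.exp (a * (z ^ 2).re + (B * z).re - ‖z‖ ^ 2 / 2))
      = (fun p : ℝ × ℝ => Real.exp (-(1 / 2 - a) * p.1 ^ 2 + B.re * p.1) *
          Real.exp (-(1 / 2 + a) * p.2 ^ 2 + (-B.im) * p.2)) ∘ Complex.measurableEquivRealProd := by
    funext z
    simp only [Function.comp_apply, Complex.measurableEquivRealProd_apply]
    rw [← Real.exp_add, gauss2d_pointwise]
  rw [this]
  rw [← Measure.volume_eq_prod ℝ ℝ] at h
  exact (hmp.integrable_comp_emb Complex.measurableEquivRealProd.measurableEmbedding).2 h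

lemma gauss2d {a : ℝ} (h1 : a < 1 / 2) (h2 : -(1 / 2 : ℝ) < a) (B : ℂ) :
    ∫ z : ℂ, Real.exp (a * (z ^ 2).re + (B * z).re - ‖z‖ ^ 2 / 2)
      = (Real.sqrt (π / (1 / 2 - a)) * Real.exp (B.re ^ 2 / (4 * (1 / 2 - a)))) *
        (Real.sqrt (π / (1 / 2 + a)) * Real.exp (B.im ^ 2 / (4 * (1 / 2 + a)))) := by
  have hx : (0 : ℝ) < 1 / 2 - a := by linarith
  have hy : (0 : ℝ) < 1 / 2 + a := by linarith
  have hmp := Complex.volume_preserving_equiv_real_prod.symm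
  have hcomp : (fun z : ℂ => Real.exp (a * (z ^ 2).re + (B * z).re - ‖z‖ ^ 2 / 2))
      ∘ Complex.measurableEquivRealProd.symm
      = (fun p : ℝ × ℝ => Real.exp (-(1 / 2 - a) * p.1 ^ 2 + B.re * p.1) *
          Real.exp (-(1 / 2 + a) * p.2 ^ 2 + (-B.im) * p.2)) := by
    funext p
    simp only [Function.comp_apply, Complex.measurableEquivRealProd_symm_apply]
    rw [← Real.exp_add, gauss2d_pointwise]
  calc ∫ z : ℂ, Real.exp (a * (z ^ 2).re + (B * z).re - ‖z‖ ^ 2 / 2)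
      = ∫ p : ℝ × ℝ, ((fun z : ℂ => Real.exp (a * (z ^ 2).re + (B * z).re - ‖z‖ ^ 2 / 2))
          ∘ Complex.measurableEquivRealProd.symm) p :=
        (hmp.integral_comp Complex.measurableEquivRealProd.symm.measurableEmbedding _).symm
    _ = ∫ p : ℝ × ℝ, Real.exp (-(1 / 2 - a) * p.1 ^ 2 + B.re * p.1) *
          Real.exp (-(1 / 2 + a) * p.2 ^ 2 + (-B.im) * p.2) := by rw [hcomp]
    _ = (∫ x : ℝ, Real.exp (-(1 / 2 - a) * x ^ 2 + B.re * x)) *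
          (∫ y : ℝ, Real.exp (-(1 / 2 + a) * y ^ 2 + (-B.im) * y)) := by
        rw [Measure.volume_eq_prod ℝ ℝ]
        exact integral_prod_mul (fun x : ℝ => Real.exp (-(1 / 2 - a) * x ^ 2 + B.re * x))
          (fun y : ℝ => Real.exp (-(1 / 2 + a) * y ^ 2 + (-B.im) * y))
    _ = _ := by
        rw [gauss1d hx, gauss1d hy]
        ring_nf

end aux

section main

variable {s t : ℂ}

set_option maxHeartbeats 1000000 in
lemma key_bound (s t : ℂ) (hst : ‖s‖ ^ 2 ≥ ‖t‖ ^ 2 + 1) (w : ℂ) :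
    (∫⁻ z : ℂ, ENNReal.ofReal (‖Kst s t z w‖ *
        Real.exp (-(‖z‖ ^ 2 + ‖w‖ ^ 2) / 2)))
      ≤ ENNReal.ofReal ((2 * Real.pi * Real.sqrt (‖s‖) /
            Real.sqrt (‖s‖ ^ 2 - ‖t‖ ^ 2)) *
          Real.exp (-(‖s‖ ^ 2 - ‖t‖ ^ 2 - 1) * ‖w‖ ^ 2 /
            (2 * ‖s‖ * (‖s‖ + ‖t‖)))) := by
  set S := ‖s‖ with hSdef
  set T := ‖t‖ with hTdef
  have hT0 : 0 ≤ T := norm_nonneg t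
  have hS0' : 0 ≤ S := norm_nonneg s
  have hS1 : 1 ≤ S := by nlinarith
  have hS0 : 0 < S := by linarith
  have hs0 : s ≠ 0 := by
    have : ‖s‖ ≠ 0 := by rw [← hSdef]; exact ne_of_gt hS0
    exact norm_ne_zero_iff.mp this
  have hTS : T < S := by nlinarith
  have hSC : (S : ℂ) ≠ 0 := by exact_mod_cast ne_of_gt hS0
  -- the rotation
  obtain ⟨e, he1, hc1⟩ : ∃ e : ℂ, ‖e‖ = 1 ∧ e ^ 2 * t * (S : ℂ) = (T : ℂ) * s := by
    rcases eq_or_ne t 0 with ht | ht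
    · refine ⟨1, by simp, ?_⟩
      have : T = 0 := by rw [hTdef, ht, norm_zero]
      rw [ht, this]; simp
    · have hTpos : 0 < T := norm_pos_iff.mpr ht
      have hd0 : (T : ℂ) * s / ((S : ℂ) * t) ≠ 0 := by
        apply div_ne_zero (mul_ne_zero (by exact_mod_cast ne_of_gt hTpos) hs0)
          (mul_ne_zero hSC ht)
      refine ⟨((T : ℂ) * s / ((S : ℂ) * t)) ^ ((2 : ℕ) : ℂ)⁻¹, ?_, ?_⟩
      · rw [show (((2:ℕ):ℂ))⁻¹ = ((2:ℕ):ℂ)⁻¹ from rfl]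
        rw [Complex.norm_cpow_inv_nat]
        have habsd : ‖(T : ℂ) * s / ((S : ℂ) * t)‖ = 1 := by
          rw [norm_div, norm_mul, norm_mul, Complex.norm_real, Complex.norm_real,
            Real.norm_eq_abs, Real.norm_eq_abs, abs_of_nonneg hT0, abs_of_nonneg hS0', ← hSdef, ← hTdef]
          field_simp
        rw [habsd, Real.one_rpow]
      · have hsq : (((T : ℂ) * s / ((S : ℂ) * t)) ^ ((2:ℕ):ℂ)⁻¹) ^ (2:ℕ)
            = (T : ℂ) * s / ((S : ℂ) * t) := Complex.cpow_nat_inv_pow _ (by norm_num)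
        rw [show (((T : ℂ) * s / ((S : ℂ) * t)) ^ ((2:ℕ):ℂ)⁻¹) ^ (2:ℕ)
            = (((T : ℂ) * s / ((S : ℂ) * t)) ^ ((2:ℕ):ℂ)⁻¹) ^ (2:ℕ) from rfl] at hsq
        have h2 : (((T : ℂ) * s / ((S : ℂ) * t)) ^ ((2:ℕ):ℂ)⁻¹) ^ 2
            = (T : ℂ) * s / ((S : ℂ) * t) := by exact_mod_cast hsq
        rw [h2]; field_simp
  have he0 : e ≠ 0 := by
    intro h; rw [h, norm_zero] at he1; norm_num at he1
  -- conjugate condition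
  have hc2 : (starRingEnd ℂ) t * s = ((T : ℂ) * (S : ℂ)) * e ^ 2 := by
    rcases eq_or_ne t 0 with ht | ht
    · have : T = 0 := by rw [hTdef, ht, norm_zero]
      rw [ht, this]; simp
    · have hconj : (starRingEnd ℂ) t * t = (T : ℂ) ^ 2 := by
        rw [mul_comm, Complex.mul_conj, hTdef]
        push_cast [Complex.normSq_eq_norm_sq]
        norm_num
      have h2 : ((starRingEnd ℂ) t * s) * t = (((T : ℂ) * (S : ℂ)) * e ^ 2) * t := by
        linear_combination s * hconj - (T : ℂ) * hc1
      exact mul_right_cancel₀ ht h2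
  -- abbreviations
  set W := ‖w‖ ^ 2 with hWdef
  have hW0 : 0 ≤ W := by rw [hWdef]; positivity
  set a : ℝ := T / (2 * S) with hadef
  have ha0 : 0 ≤ a := by rw [hadef]; positivity
  have ha1 : a < 1 / 2 := by
    rw [hadef, div_lt_iff₀ (by linarith)]; linarith
  have ha2 : -(1 / 2 : ℝ) < a := by linarith
  set B' : ℂ := (starRingEnd ℂ) w * e / s with hB'def
  set u1 := B'.re with hu1def
  set u2 := B'.im with hu2def
  have hsum : u1 ^ 2 + u2 ^ 2 = W / S ^ 2 := by
    have habsB' : ‖B'‖ = ‖w‖ / S := by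
      rw [hB'def, norm_div, norm_mul, he1, mul_one, ← hSdef, Complex.norm_conj]
    have h1 := Complex.sq_norm B'
    rw [Complex.normSq_apply, habsB'] at h1
    rw [hu1def, hu2def, hWdef]
    rw [div_pow] at h1
    nlinarith [h1]
  -- constant term
  have hCcC : -((starRingEnd ℂ) t * ((starRingEnd ℂ) w) ^ 2) / (2 * s)
      = (((-(T * S) / 2 : ℝ)) : ℂ) * B' ^ 2 := by
    rw [hB'def]
    field_simp
    push_cast
    ring_nf
    linear_combination (-((starRingEnd ℂ) w) ^ 2) * hc2
  have hCc : (-((starRingEnd ℂ) t * ((starRingEnd ℂ) w) ^ 2) / (2 * s)).re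
      = (-(T * S) / 2) * (u1 ^ 2 - u2 ^ 2) := by
    rw [hCcC, Complex.re_ofReal_mul]
    congr 1
    rw [sq, Complex.mul_re, hu1def, hu2def]
    ring
  -- the exponent identity after rotation
  have hxi : ∀ z : ℂ, ((t * (e * z) ^ 2 - (starRingEnd ℂ) t * ((starRingEnd ℂ) w) ^ 2
        + 2 * (e * z) * (starRingEnd ℂ) w) / (2 * s))
      = ((a : ℝ) : ℂ) * z ^ 2 + B' * z
        + (-((starRingEnd ℂ) t * ((starRingEnd ℂ) w) ^ 2) / (2 * s)) := by
    intro z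
    rw [hadef, hB'def]
    push_cast
    field_simp
    push_cast
    ring_nf
    linear_combination (z ^ 2) * hc1
  -- modulus of csqrt
  have hcs : ‖csqrt s‖ = Real.sqrt S := by
    rw [csqrt, show ((1:ℂ)/2) = (((1/2:ℝ)):ℂ) by norm_num, Complex.norm_cpow_real,
      ← Real.sqrt_eq_rpow]
  have hKabs : ∀ z : ℂ, ‖Kst s t z w‖
      = (Real.sqrt S)⁻¹ * Real.exp (((t * z ^ 2 - (starRingEnd ℂ) t * ((starRingEnd ℂ) w) ^ 2
          + 2 * z * (starRingEnd ℂ) w) / (2 * s)).re) := by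
    intro z
    rw [Kst, norm_mul, norm_inv, hcs, Complex.norm_exp]
  set c1 : ℝ := (Real.sqrt S)⁻¹ * Real.exp (-(T * S) / 2 * (u1 ^ 2 - u2 ^ 2) - W / 2)
    with hc1def
  have hF : ∀ z : ℂ, ‖Kst s t (e * z) w‖ *
        Real.exp (-(‖e * z‖ ^ 2 + W) / 2)
      = c1 * Real.exp (a * (z ^ 2).re + (B' * z).re - ‖z‖ ^ 2 / 2) := by
    intro z
    rw [hKabs (e * z), hxi z, norm_mul, he1, one_mul, hc1def]
    rw [Complex.add_re, Complex.add_re, Complex.re_ofReal_mul, hCc]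
    rw [mul_assoc, mul_assoc, ← Real.exp_add, ← Real.exp_add]
    congr 2
    ring
  -- measurability
  have hmeas : Measurable fun z : ℂ => ENNReal.ofReal (‖Kst s t z w‖ *
      Real.exp (-(‖z‖ ^ 2 + W) / 2)) := by
    apply ENNReal.measurable_ofReal.comp
    apply Measurable.mul
    · apply Continuous.measurable
      apply continuous_norm.comp
      unfold Kst
      fun_prop
    · apply Continuous.measurable
      apply Real.continuous_exp.comp
      have h1 : Continuous fun z : ℂ => ‖z‖ := continuous_norm
      fun_prop
  -- rotation invariance
  have hcirc : MeasurePreserving (fun z : ℂ => e * z) volume volume := by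
    have hmem : e ∈ Submonoid.unitSphere ℂ := by
      show e ∈ Metric.sphere (0 : ℂ) 1
      exact mem_sphere_zero_iff_norm.mpr (by rw [he1])
    have h := (rotation (⟨e, hmem⟩ : Circle)).measurePreserving
    have heq : ⇑(rotation (⟨e, hmem⟩ : Circle)) = fun z : ℂ => e * z := by
      funext z; rfl
    rwa [heq] at h
  -- inequalities for the final bound
  have hx : (0:ℝ) < 1/2 - a := by linarith
  have hy : (0:ℝ) < 1/2 + a := by linarith
  have hSmT : (0:ℝ) < S - T := by linarith
  have hSpT : (0:ℝ) < S + T := by linarith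
  have hD1 : (0:ℝ) ≤ S^2 - T^2 - 1 := by nlinarith
  have hDpos : (0:ℝ) < S^2 - T^2 := by nlinarith
  have hW : W = S^2 * (u1^2 + u2^2) := by
    rw [eq_div_iff (by positivity)] at hsum
    linarith [hsum]
  calc ∫⁻ z : ℂ, ENNReal.ofReal (‖Kst s t z w‖ *
        Real.exp (-(‖z‖ ^ 2 + W) / 2))
      = ∫⁻ z : ℂ, ENNReal.ofReal (‖Kst s t (e * z) w‖ *
          Real.exp (-(‖e * z‖ ^ 2 + W) / 2)) := (hcirc.lintegral_comp hmeas).symm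
    _ = ∫⁻ z : ℂ, ENNReal.ofReal (c1 *
          Real.exp (a * (z ^ 2).re + (B' * z).re - ‖z‖ ^ 2 / 2)) := by
        congr 1; funext z; rw [hF z]
    _ = ENNReal.ofReal (∫ z : ℂ, c1 *
          Real.exp (a * (z ^ 2).re + (B' * z).re - ‖z‖ ^ 2 / 2)) :=
        (ofReal_integral_eq_lintegral_ofReal
          ((gauss2d_integrable ha1 ha2 B').const_mul c1)
          (ae_of_all _ fun z => by positivity)).symm
    _ ≤ _ := by
        rw [integral_const_mul, gauss2d ha1 ha2 B']
        apply ENNReal.ofReal_le_ofReal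
        have hpref : (Real.sqrt S)⁻¹ * (Real.sqrt (π/(1/2-a)) * Real.sqrt (π/(1/2+a)))
            = 2*π*Real.sqrt S / Real.sqrt (S^2 - T^2) := by
          rw [← Real.sqrt_inv, ← Real.sqrt_mul (by positivity), ← Real.sqrt_mul (by positivity)]
          rw [show 2*π*Real.sqrt S = Real.sqrt ((2*π)^2 * S) by
                rw [Real.sqrt_mul (by positivity), Real.sqrt_sq (by positivity)],
              ← Real.sqrt_div (by positivity)]
          congr 1
          rw [hadef]
          field_simp
          ring
        have h5 : S*(S^2-T^2-1)*u1^2/(2*(S+T)) ≤ S*(S^2-T^2-1)*u1^2/(2*(S-T)) := by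
          have hnum : 0 ≤ S*(S^2-T^2-1)*u1^2 := mul_nonneg (mul_nonneg hS0.le hD1) (sq_nonneg _)
          gcongr
          linarith
        have hexp : (-(T*S)/2 * (u1^2-u2^2) - W/2) + (u1^2/(4*(1/2-a)) + u2^2/(4*(1/2+a)))
            ≤ -(S^2-T^2-1) * W / (2*S*(S+T)) := by
          have hEL : (-(T*S)/2 * (u1^2-u2^2) - W/2) + (u1^2/(4*(1/2-a)) + u2^2/(4*(1/2+a)))
              = -(S*(S^2-T^2-1)*u1^2/(2*(S-T))) - S*(S^2-T^2-1)*u2^2/(2*(S+T)) := by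
            rw [hadef, hW]; field_simp; ring
          have hER : -(S*(S^2-T^2-1)*u1^2/(2*(S+T))) - S*(S^2-T^2-1)*u2^2/(2*(S+T))
              = -(S^2-T^2-1) * W / (2*S*(S+T)) := by
            rw [hW]; field_simp; ring
          rw [hEL, ← hER]
          linarith [h5]
        calc c1 * ((Real.sqrt (π/(1/2-a)) * Real.exp (u1^2/(4*(1/2-a)))) *
              (Real.sqrt (π/(1/2+a)) * Real.exp (u2^2/(4*(1/2+a)))))
            = ((Real.sqrt S)⁻¹ * (Real.sqrt (π/(1/2-a)) * Real.sqrt (π/(1/2+a)))) *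
              Real.exp ((-(T*S)/2 * (u1^2-u2^2) - W/2)
                + (u1^2/(4*(1/2-a)) + u2^2/(4*(1/2+a)))) := by
              rw [hc1def]
              simp only [Real.exp_add]
              ring
          _ ≤ _ := by
              rw [hpref]
              exact mul_le_mul_of_nonneg_left (Real.exp_le_exp.mpr hexp) (by positivity)

end main

set_option maxHeartbeats 1000000 in
theorem stmt16 (s t : ℂ) (hst : ‖s‖ ^ 2 ≥ ‖t‖ ^ 2 + 1) :
    (∀ w : ℂ,
      (∫⁻ z : ℂ, ENNReal.ofReal (‖Kst s t z w‖ *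
          Real.exp (-(‖z‖ ^ 2 + ‖w‖ ^ 2) / 2)))
        ≤ ENNReal.ofReal ((2 * Real.pi * Real.sqrt (‖s‖) /
              Real.sqrt (‖s‖ ^ 2 - ‖t‖ ^ 2)) *
            Real.exp (-(‖s‖ ^ 2 - ‖t‖ ^ 2 - 1) * ‖w‖ ^ 2 /
              (2 * ‖s‖ * (‖s‖ + ‖t‖))))) ∧
    (⨆ w : ℂ, ∫⁻ z : ℂ, ENNReal.ofReal (‖Kst s t z w‖ *
        Real.exp (-(‖z‖ ^ 2 + ‖w‖ ^ 2) / 2))) < ⊤ ∧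
    (‖s‖ ^ 2 > ‖t‖ ^ 2 + 1 →
      Tendsto (fun w : ℂ => ∫⁻ z : ℂ, ENNReal.ofReal (‖Kst s t z w‖ *
          Real.exp (-(‖z‖ ^ 2 + ‖w‖ ^ 2) / 2)))
        (Bornology.cobounded ℂ) (nhds 0)) := by
  have hT0 : 0 ≤ ‖t‖ := norm_nonneg t
  have hS0' : 0 ≤ ‖s‖ := norm_nonneg s
  have hS1 : 1 ≤ ‖s‖ := by nlinarith
  have hT2 : ‖t‖ < ‖s‖ := by nlinarith
  have hSpT : 0 < 2 * ‖s‖ * (‖s‖ + ‖t‖) := by nlinarith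
  have hD1 : 0 ≤ ‖s‖ ^ 2 - ‖t‖ ^ 2 - 1 := by nlinarith
  refine ⟨key_bound s t hst, ?_, ?_⟩
  · -- uniform finiteness
    have hbound : ∀ w : ℂ, (∫⁻ z : ℂ, ENNReal.ofReal (‖Kst s t z w‖ *
          Real.exp (-(‖z‖ ^ 2 + ‖w‖ ^ 2) / 2)))
        ≤ ENNReal.ofReal (2 * Real.pi * Real.sqrt (‖s‖) /
            Real.sqrt (‖s‖ ^ 2 - ‖t‖ ^ 2)) := by
      intro w
      refine (key_bound s t hst w).trans (ENNReal.ofReal_le_ofReal ?_)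
      have hexp1 : Real.exp (-(‖s‖ ^ 2 - ‖t‖ ^ 2 - 1) * ‖w‖ ^ 2 /
          (2 * ‖s‖ * (‖s‖ + ‖t‖))) ≤ 1 := by
        rw [Real.exp_le_one_iff]
        apply div_nonpos_of_nonpos_of_nonneg
        · have : 0 ≤ (‖s‖ ^ 2 - ‖t‖ ^ 2 - 1) * ‖w‖ ^ 2 :=
            mul_nonneg hD1 (by positivity)
          linarith
        · linarith
      exact mul_le_of_le_one_right (by positivity) hexp1
    exact lt_of_le_of_lt (iSup_le hbound) ENNReal.ofReal_lt_top
  · -- decay at infinity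
    intro hgt
    have hk : 0 < (‖s‖ ^ 2 - ‖t‖ ^ 2 - 1) /
        (2 * ‖s‖ * (‖s‖ + ‖t‖)) := by
      apply div_pos (by nlinarith) hSpT
    have hnorm : Tendsto (fun w : ℂ => ‖w‖) (Bornology.cobounded ℂ) atTop := by
      simpa using tendsto_norm_cobounded_atTop (E := ℂ)
    have hsq : Tendsto (fun w : ℂ => -((‖s‖ ^ 2 - ‖t‖ ^ 2 - 1) /
          (2 * ‖s‖ * (‖s‖ + ‖t‖)) * ‖w‖ ^ 2))
        (Bornology.cobounded ℂ) atBot := by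
      apply tendsto_neg_atTop_atBot.comp
      exact Tendsto.const_mul_atTop hk ((tendsto_pow_atTop two_ne_zero).comp hnorm)
    have hfun : (fun w : ℂ => -(‖s‖ ^ 2 - ‖t‖ ^ 2 - 1) * ‖w‖ ^ 2 /
          (2 * ‖s‖ * (‖s‖ + ‖t‖)))
        = fun w : ℂ => -((‖s‖ ^ 2 - ‖t‖ ^ 2 - 1) /
          (2 * ‖s‖ * (‖s‖ + ‖t‖)) * ‖w‖ ^ 2) := by
      funext w; ring
    have h2 : Tendsto (fun w : ℂ => (2 * Real.pi * Real.sqrt (‖s‖) /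
          Real.sqrt (‖s‖ ^ 2 - ‖t‖ ^ 2)) *
          Real.exp (-(‖s‖ ^ 2 - ‖t‖ ^ 2 - 1) * ‖w‖ ^ 2 /
            (2 * ‖s‖ * (‖s‖ + ‖t‖))))
        (Bornology.cobounded ℂ) (nhds 0) := by
      have h3 := Real.tendsto_exp_atBot.comp hsq
      have h4 := h3.const_mul (2 * Real.pi * Real.sqrt (‖s‖) /
          Real.sqrt (‖s‖ ^ 2 - ‖t‖ ^ 2))
      rw [mul_zero] at h4
      refine h4.congr fun w => ?_
      simp only [Function.comp_apply]
      congr 1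
      ring
    have h5 : Tendsto (fun w : ℂ => ENNReal.ofReal ((2 * Real.pi * Real.sqrt (‖s‖) /
          Real.sqrt (‖s‖ ^ 2 - ‖t‖ ^ 2)) *
          Real.exp (-(‖s‖ ^ 2 - ‖t‖ ^ 2 - 1) * ‖w‖ ^ 2 /
            (2 * ‖s‖ * (‖s‖ + ‖t‖)))))
        (Bornology.cobounded ℂ) (nhds 0) := by
      have := ENNReal.tendsto_ofReal h2
      simpa using this
    exact tendsto_of_tendsto_of_tendsto_of_le_of_le tendsto_const_nhds h5
      (fun w => zero_le) (fun w => key_bound s t hst w)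
end
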